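/- The only nonzero integer vector in the half-open fundamental parallelepiped {λ₁h₁ + λ₂h₂ + λ₄h₄ + λ₅h₅ : 0 ≤ λᵢ < 1} of the simplicial cone Cone(h₁,h₂,h₄,h₅) is h₇ = (1, 2, −1, 0), and it satisfies 2·h₇ = h₂ + h₄ + h₅; in particular h₇ lies in the cone Cone(h₂,h₄,h₅). -/
import Mathlib


/-- The lattice points `h₁, h₂, h₄, h₅` (in this order). -/
def h1 : Fin 4 → ℤ := ![1,0,0,0]
def h2 : Fin 4 → ℤ := ![0,1,0,0]
def h4 : Fin 4 → ℤ := ![0,0,0,1]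
def h5 : Fin 4 → ℤ := ![2,3,-2,-1]
def h7 : Fin 4 → ℤ := ![1,2,-1,0]

/-- Coercion of an integer vector to a real vector. -/
def toR (v : Fin 4 → ℤ) : Fin 4 → ℝ := fun j => (v j : ℝ)

/-- The convex cone generated by a finite family of vectors in `ℝ⁴`. -/
def cone {n : ℕ} (v : Fin n → (Fin 4 → ℝ)) : Set (Fin 4 → ℝ) :=
  {x | ∃ lam : Fin n → ℝ, (∀ i, 0 ≤ lam i) ∧ x = ∑ i, lam i • v i}

/-- The half-open fundamental parallelepiped of the simplicial cone `Cone(h₁,h₂,h₄,h₅)`,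
consisting of points `λ₁h₁ + λ₂h₂ + λ₄h₄ + λ₅h₅` with `0 ≤ λᵢ < 1`. -/
def fundPar : Set (Fin 4 → ℝ) :=
  {x | ∃ lam : Fin 4 → ℝ, (∀ i, 0 ≤ lam i ∧ lam i < 1) ∧
    x = ∑ i, lam i • ![toR h1, toR h2, toR h4, toR h5] i}

set_option maxHeartbeats 2000000 in
/-- The only nonzero integer vector in the half-open fundamental parallelepiped of
`Cone(h₁,h₂,h₄,h₅)` is `h₇ = (1,2,−1,0)`, which satisfies `2·h₇ = h₂ + h₄ + h₅`;
in particular `h₇ ∈ Cone(h₂,h₄,h₅)`. -/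
theorem stmt_3 :
    (∀ v : Fin 4 → ℤ, (v ≠ 0 ∧ toR v ∈ fundPar) ↔ v = h7) ∧
    (2 : ℕ) • h7 = h2 + h4 + h5 ∧
    toR h7 ∈ cone ![toR h2, toR h4, toR h5] := by
  refine ⟨?_, ?_, ?_⟩
  · intro v
    constructor
    · rintro ⟨hv0, lam, hb, hx⟩
      have e0 := congrFun hx 0
      have e1 := congrFun hx 1
      have e2 := congrFun hx 2
      have e3 := congrFun hx 3
      simp [Fin.sum_univ_four, toR, h1, h2, h4, h5] at e0 e1 e2 e3
      have b0 := hb 0; have b1 := hb 1; have b2 := hb 2; have b3 := hb 3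
      -- v 2 = -2 * lam 3
      have hv2 : (-2 : ℝ) < (v 2 : ℝ) ∧ (v 2 : ℝ) ≤ 0 := by
        constructor <;> nlinarith [b3.1, b3.2]
      have hv2' : v 2 = 0 ∨ v 2 = -1 := by
        have h1 : (-2 : ℤ) < v 2 := by exact_mod_cast hv2.1
        have h2 : v 2 ≤ 0 := by exact_mod_cast hv2.2
        omega
      rcases hv2' with h | h
      · exfalso
        have hl3 : lam 3 = 0 := by
          have : (v 2 : ℝ) = 0 := by exact_mod_cast h
          linarith [e2, this]
        have iv0 : v 0 = 0 := by
          have : (0 : ℝ) ≤ (v 0 : ℝ) ∧ (v 0 : ℝ) < 1 := by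
            constructor <;> nlinarith [b0.1, b0.2]
          have h1 : (0 : ℤ) ≤ v 0 := by exact_mod_cast this.1
          have h2 : (v 0 : ℤ) < 1 := by exact_mod_cast this.2
          omega
        have iv1 : v 1 = 0 := by
          have : (0 : ℝ) ≤ (v 1 : ℝ) ∧ (v 1 : ℝ) < 1 := by
            constructor <;> nlinarith [b1.1, b1.2]
          have h1 : (0 : ℤ) ≤ v 1 := by exact_mod_cast this.1
          have h2 : (v 1 : ℤ) < 1 := by exact_mod_cast this.2
          omega
        have iv3 : v 3 = 0 := by
          have : (0 : ℝ) ≤ (v 3 : ℝ) ∧ (v 3 : ℝ) < 1 := by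
            constructor <;> nlinarith [b2.1, b2.2]
          have h1 : (0 : ℤ) ≤ v 3 := by exact_mod_cast this.1
          have h2 : (v 3 : ℤ) < 1 := by exact_mod_cast this.2
          omega
        apply hv0
        funext j
        fin_cases j <;> simp [iv0, iv1, h, iv3]
      · have hl3 : lam 3 = 1/2 := by
          have : (v 2 : ℝ) = -1 := by exact_mod_cast h
          linarith [e2, this]
        have iv0 : v 0 = 1 := by
          have : (1 : ℝ) ≤ (v 0 : ℝ) ∧ (v 0 : ℝ) < 2 := by
            constructor <;> nlinarith [b0.1, b0.2]
          have h1 : (1 : ℤ) ≤ v 0 := by exact_mod_cast this.1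
          have h2 : (v 0 : ℤ) < 2 := by exact_mod_cast this.2
          omega
        have iv1 : v 1 = 2 := by
          have : (3/2 : ℝ) ≤ (v 1 : ℝ) ∧ (v 1 : ℝ) < 5/2 := by
            constructor <;> nlinarith [b1.1, b1.2]
          have h1 : (1 : ℤ) < v 1 := by
            have : (1 : ℝ) < (v 1 : ℝ) := by linarith [this.1]
            exact_mod_cast this
          have h2 : (v 1 : ℤ) < 3 := by
            have : (v 1 : ℝ) < 3 := by linarith [this.2]
            exact_mod_cast this
          omega
        have iv3 : v 3 = 0 := by
          have : (-1 : ℝ) < (v 3 : ℝ) ∧ (v 3 : ℝ) < 1 := by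
            constructor <;> nlinarith [b2.1, b2.2]
          have h1 : (-1 : ℤ) < v 3 := by exact_mod_cast this.1
          have h2 : (v 3 : ℤ) < 1 := by exact_mod_cast this.2
          omega
        funext j
        fin_cases j <;> simp [h7, iv0, iv1, h, iv3]
    · rintro rfl
      refine ⟨?_, ![0, 1/2, 1/2, 1/2], ?_, ?_⟩
      · intro hc
        have := congrFun hc 0
        simp [h7] at this
      · intro i; fin_cases i <;> norm_num
      · simp only [Fin.sum_univ_four, Matrix.cons_val_zero, Matrix.cons_val_one,
          Matrix.head_cons, Matrix.cons_val_two, Matrix.tail_cons, Matrix.cons_val_three]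
        funext j
        simp only [Pi.add_apply, Pi.smul_apply, smul_eq_mul]
        fin_cases j <;> simp [toR, h1, h2, h4, h5, h7] <;> norm_num
  · funext j
    fin_cases j <;> rfl
  · refine ⟨![1/2, 1/2, 1/2], ?_, ?_⟩
    · intro i; fin_cases i <;> norm_num
    · simp only [Fin.sum_univ_three, Matrix.cons_val_zero, Matrix.cons_val_one,
        Matrix.head_cons, Matrix.cons_val_two, Matrix.tail_cons]
      funext j
      simp only [Pi.add_apply, Pi.smul_apply, smul_eq_mul]
      fin_cases j <;> simp [toR, h2, h4, h5, h7] <;> norm_num
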